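/- Let G be a finite nonempty simple graph with maximum degree Δ ≥ 1. The dominating set S produced by the greedy algorithm (repeatedly choosing the vertex covering the most uncovered vertices) satisfies |S| ≤ (ln Δ + 2) · |S*|, where S* is a minimum dominating set of G. -/

import Mathlib

/-- `S` is a dominating set of `G`: every vertex is in `S` or adjacent to a vertex of `S`. -/
def IsDominating {V : Type*} (G : SimpleGraph V) (S : Finset V) : Prop :=
  ∀ v : V, v ∈ S ∨ ∃ s ∈ S, G.Adj s v

/-- The closed neighborhood of `v`: the set of vertices covered by `v`
(`v` covers itself and its neighbors). -/
def closedNbhd {V : Type*} [Fintype V] [DecidableEq V] (G : SimpleGraph V)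
    [DecidableRel G.Adj] (v : V) : Finset V :=
  insert v (G.neighborFinset v)

/-- `GreedyRun G U S` holds when `S` is a possible output of the greedy dominating set
algorithm started with uncovered set `U`: while some vertex is uncovered, it selects a
vertex covering the maximum number of currently uncovered vertices, adds it to the
output, and removes all vertices it covers from the uncovered set. -/
inductive GreedyRun {V : Type*} [Fintype V] [DecidableEq V] (G : SimpleGraph V)
    [DecidableRel G.Adj] : Finset V → Finset V → Prop
  | base : GreedyRun G ∅ ∅
  | step {U S : Finset V} (v : V) (hU : U.Nonempty)
      (hmax : ∀ w : V, (closedNbhd G w ∩ U).card ≤ (closedNbhd G v ∩ U).card)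
      (h : GreedyRun G (U \ closedNbhd G v) S) :
      GreedyRun G U (insert v S)

/-- The key real-arithmetic inequality for one greedy step, with potential
`k·log(max(u,k)/k) + min(u,k)`. -/
lemma greedy_step_ineq (k u u' : ℕ) (hk : 1 ≤ k) (hu : 1 ≤ u) (hlt : u' < u)
    (hkey : k * u' + u ≤ k * u) :
    (k : ℝ) * Real.log ((max u' k : ℕ) / (k:ℝ)) + ((min u' k : ℕ) : ℝ) + 1 ≤
    (k : ℝ) * Real.log ((max u k : ℕ) / (k:ℝ)) + ((min u k : ℕ) : ℝ) := by
  have hk0 : (0:ℝ) < k := by exact_mod_cast hk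
  by_cases hcase : u ≤ k
  · have h1 : max u k = k := max_eq_right hcase
    have h2 : max u' k = k := max_eq_right (le_of_lt (lt_of_lt_of_le hlt hcase))
    have h3 : min u k = u := min_eq_left hcase
    have h4 : min u' k = u' := min_eq_left (by omega)
    rw [h1, h2, h3, h4]
    have : (u':ℝ) + 1 ≤ u := by exact_mod_cast hlt
    linarith
  · push_neg at hcase
    have h1 : max u k = u := max_eq_left hcase.le
    have h3 : min u k = k := min_eq_right hcase.le
    have hupos : (0:ℝ) < u := by exact_mod_cast hu
    by_cases hc2 : k ≤ u'
    · have h2 : max u' k = u' := max_eq_left hc2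
      have h4 : min u' k = k := min_eq_right hc2
      rw [h1, h2, h3, h4]
      have hu'pos : (0:ℝ) < u' := by
        have : 0 < u' := by omega
        exact_mod_cast this
      have hr : (k:ℝ) * u' + u ≤ k * u := by exact_mod_cast hkey
      have hfrac : (u':ℝ)/u ≤ ((k:ℝ) - 1)/k := by
        rw [div_le_div_iff₀ hupos hk0]
        nlinarith
      have hfpos : (0:ℝ) < (u':ℝ)/u := div_pos hu'pos hupos
      have hlog1 : Real.log ((u':ℝ)/u) ≤ (u':ℝ)/u - 1 := Real.log_le_sub_one_of_pos hfpos
      have heq : ((k:ℝ) - 1)/k - 1 = -(1/k) := by field_simp; ring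
      have hlog : Real.log ((u':ℝ)/u) ≤ -(1/k) := by
        calc Real.log ((u':ℝ)/u) ≤ (u':ℝ)/u - 1 := hlog1
          _ ≤ ((k:ℝ) - 1)/k - 1 := by linarith
          _ = -(1/k) := heq
      rw [Real.log_div (ne_of_gt hu'pos) (ne_of_gt hk0),
          Real.log_div (ne_of_gt hupos) (ne_of_gt hk0)]
      rw [Real.log_div (ne_of_gt hu'pos) (ne_of_gt hupos)] at hlog
      have hmul : (k:ℝ) * (Real.log u' - Real.log u) ≤ k * (-(1/k)) :=
        mul_le_mul_of_nonneg_left hlog hk0.le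
      have : (k:ℝ) * (-(1/k)) = -1 := by field_simp
      nlinarith [hmul]
    · push_neg at hc2
      have h2 : max u' k = k := max_eq_right hc2.le
      have h4 : min u' k = u' := min_eq_left hc2.le
      rw [h1, h2, h3, h4]
      rw [div_self (ne_of_gt hk0), Real.log_one, mul_zero]
      have hlogpos : 0 ≤ Real.log ((u:ℝ)/k) := by
        apply Real.log_nonneg
        rw [le_div_iff₀ hk0, one_mul]
        exact_mod_cast hcase.le
      have h5 : (u':ℝ) + 1 ≤ k := by exact_mod_cast hc2
      nlinarith [mul_nonneg hk0.le hlogpos]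

section Aux

variable {V : Type*} [Fintype V] [DecidableEq V] (G : SimpleGraph V) [DecidableRel G.Adj]

lemma mem_closedNbhd_iff {v w : V} : w ∈ closedNbhd G v ↔ w = v ∨ G.Adj v w := by
  simp [closedNbhd, SimpleGraph.mem_neighborFinset]

/-- A dominating set's closed neighborhoods cover any set `U`,
hence `|U|` is at most the sum of the intersection sizes. -/
lemma dominating_sum_bound {T : Finset V} (hT : IsDominating G T) (U : Finset V) :
    U.card ≤ ∑ s ∈ T, (closedNbhd G s ∩ U).card := by
  calc U.card ≤ (T.biUnion (fun s => closedNbhd G s ∩ U)).card := by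
        apply Finset.card_le_card
        intro x hx
        rw [Finset.mem_biUnion]
        rcases hT x with h | ⟨s, hs, hadj⟩
        · exact ⟨x, h, by simp [mem_closedNbhd_iff, hx]⟩
        · exact ⟨s, hs, by simp [mem_closedNbhd_iff, hx, hadj]⟩
    _ ≤ ∑ s ∈ T, (closedNbhd G s ∩ U).card := Finset.card_biUnion_le

lemma card_closedNbhd (v : V) : (closedNbhd G v).card = G.degree v + 1 := by
  rw [closedNbhd, Finset.card_insert_of_notMem (by simp [SimpleGraph.mem_neighborFinset]),
    SimpleGraph.card_neighborFinset_eq_degree]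

/-- Main potential bound for the greedy run, proved by induction on the run. -/
lemma greedy_main {T : Finset V} (hT : IsDominating G T) (hk : 1 ≤ T.card)
    {U S : Finset V} (h : GreedyRun G U S) :
    (S.card : ℝ) ≤ (T.card : ℝ) * Real.log ((max U.card T.card : ℕ) / (T.card : ℝ))
      + ((min U.card T.card : ℕ) : ℝ) := by
  induction h with
  | base =>
      have hk0 : ((T.card : ℝ)) ≠ 0 := by positivity
      simp [Nat.max_eq_right (Nat.zero_le _), div_self hk0]
  | @step U S v hU hmaxv h ih =>
      set k := T.card with hkdef
      set c := (U ∩ closedNbhd G v).card with hcdef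
      have hadd : (U \ closedNbhd G v).card + c = U.card := by
        rw [hcdef, add_comm]
        exact Finset.card_inter_add_card_sdiff U (closedNbhd G v)
      have hcovU : U.card ≤ k * c := by
        calc U.card ≤ ∑ s ∈ T, (closedNbhd G s ∩ U).card := dominating_sum_bound G hT U
          _ ≤ ∑ _s ∈ T, c := by
              apply Finset.sum_le_sum
              intro s _
              rw [hcdef, Finset.inter_comm U]
              exact hmaxv s
          _ = k * c := by rw [Finset.sum_const, smul_eq_mul]
      have hc1 : 1 ≤ c := by
        obtain ⟨u0, hu0⟩ := hU
        have hmem : u0 ∈ closedNbhd G u0 ∩ U := by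
          simp [closedNbhd, hu0]
        have h1 : 1 ≤ (closedNbhd G u0 ∩ U).card := Finset.card_pos.mpr ⟨u0, hmem⟩
        calc 1 ≤ (closedNbhd G u0 ∩ U).card := h1
          _ ≤ (closedNbhd G v ∩ U).card := hmaxv u0
          _ = c := by rw [hcdef, Finset.inter_comm]
      have hu : 1 ≤ U.card := Finset.card_pos.mpr hU
      have hlt : (U \ closedNbhd G v).card < U.card := by omega
      have hkey : k * (U \ closedNbhd G v).card + U.card ≤ k * U.card := by
        have h2 : k * (U \ closedNbhd G v).card + k * c = k * U.card := by
          rw [← Nat.mul_add, hadd]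
        omega
      have hins : ((insert v S).card : ℝ) ≤ (S.card : ℝ) + 1 := by
        exact_mod_cast Finset.card_insert_le v S
      have := greedy_step_ineq k U.card (U \ closedNbhd G v).card hk hu hlt hkey
      linarith

end Aux

/-- For a finite nonempty simple graph `G` with maximum degree `Δ ≥ 1`, the dominating
set `S` produced by the greedy algorithm satisfies `|S| ≤ (ln Δ + 2) · |S*|`, where `S*`
is a minimum dominating set of `G`. -/
theorem greedy_approximation {V : Type*} [Fintype V] [DecidableEq V] [Nonempty V]
    (G : SimpleGraph V) [DecidableRel G.Adj] (hΔ : 1 ≤ G.maxDegree)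
    (S Sstar : Finset V)
    (hS : GreedyRun G Finset.univ S)
    (hSstar : IsDominating G Sstar)
    (hmin : ∀ T : Finset V, IsDominating G T → Sstar.card ≤ T.card) :
    (S.card : ℝ) ≤ (Real.log G.maxDegree + 2) * Sstar.card := by
  classical
  set k := Sstar.card with hkdef
  -- `Sstar` is nonempty
  have hk : 1 ≤ k := by
    obtain ⟨v0⟩ := ‹Nonempty V›
    rcases hSstar v0 with h | ⟨s, hs, _⟩
    · exact Finset.card_pos.mpr ⟨v0, h⟩
    · exact Finset.card_pos.mpr ⟨s, hs⟩
  have hk0 : (0:ℝ) < k := by exact_mod_cast hk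
  set n := (Finset.univ : Finset V).card with hndef
  set Δ := G.maxDegree with hΔdef
  have hΔ0 : (0:ℝ) < Δ := by exact_mod_cast hΔ
  -- `n ≤ k * (Δ + 1)`
  have hn : n ≤ k * (Δ + 1) := by
    calc n ≤ ∑ s ∈ Sstar, (closedNbhd G s ∩ Finset.univ).card :=
          dominating_sum_bound G hSstar Finset.univ
      _ ≤ ∑ _s ∈ Sstar, (Δ + 1) := by
          apply Finset.sum_le_sum
          intro s _
          calc (closedNbhd G s ∩ Finset.univ).card ≤ (closedNbhd G s).card :=
                Finset.card_le_card (Finset.inter_subset_left)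
            _ = G.degree s + 1 := card_closedNbhd G s
            _ ≤ Δ + 1 := by
                have := G.degree_le_maxDegree s
                omega
      _ = k * (Δ + 1) := by rw [Finset.sum_const, smul_eq_mul]
  have hmax_le : (max n k : ℕ) ≤ k * (Δ + 1) := by
    rcases max_cases n k with ⟨h1, _⟩ | ⟨h1, _⟩ <;> rw [h1] <;> nlinarith
  have hmain := greedy_main G hSstar hk hS
  -- bound the log term
  have hmaxpos : (0:ℝ) < ((max n k : ℕ) : ℝ) := by
    have : 0 < max n k := by omega
    exact_mod_cast this
  have hfracpos : (0:ℝ) < ((max n k : ℕ) : ℝ) / k := div_pos hmaxpos hk0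
  have hfrac_le : ((max n k : ℕ) : ℝ) / k ≤ (Δ : ℝ) + 1 := by
    rw [div_le_iff₀ hk0]
    calc ((max n k : ℕ) : ℝ) ≤ (k : ℝ) * ((Δ : ℝ) + 1) := by exact_mod_cast hmax_le
      _ = ((Δ : ℝ) + 1) * k := by ring
  have hlog1 : Real.log (((max n k : ℕ) : ℝ) / k) ≤ Real.log ((Δ : ℝ) + 1) :=
    Real.log_le_log hfracpos hfrac_le
  -- `log (Δ + 1) ≤ log Δ + 1`
  have hlog2 : Real.log ((Δ : ℝ) + 1) ≤ Real.log Δ + 1 := by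
    have hpos : (0:ℝ) < ((Δ : ℝ) + 1) / Δ := by positivity
    have h1 : Real.log (((Δ : ℝ) + 1) / Δ) ≤ ((Δ : ℝ) + 1) / Δ - 1 :=
      Real.log_le_sub_one_of_pos hpos
    have h2 : ((Δ : ℝ) + 1) / Δ - 1 = 1 / Δ := by field_simp; ring
    have h3 : (1:ℝ) / Δ ≤ 1 := by
      rw [div_le_one hΔ0]
      exact_mod_cast hΔ
    rw [Real.log_div (by positivity) (ne_of_gt hΔ0)] at h1
    linarith
  have hminle : ((min n k : ℕ) : ℝ) ≤ k := by
    have : min n k ≤ k := min_le_right n k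
    exact_mod_cast this
  have hlogchain : (k : ℝ) * Real.log (((max n k : ℕ) : ℝ) / k)
      ≤ (k : ℝ) * (Real.log Δ + 1) :=
    mul_le_mul_of_nonneg_left (by linarith) hk0.le
  calc (S.card : ℝ) ≤ (k : ℝ) * Real.log (((max n k : ℕ) : ℝ) / k) + ((min n k : ℕ) : ℝ) :=
        hmain
    _ ≤ (k : ℝ) * (Real.log Δ + 1) + k := by linarith
    _ = (Real.log Δ + 2) * k := by ring
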